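/- Let A and B be differential rings, ν : A → B a differential homomorphism, and suppose B is differentially generated over ν(A) by a single element η for which there exist b_1, …, b_n ∈ A with b_k·η ∈ ν(A) for all k and with the smallest radical differential ideal of A containing {b_1, …, b_n} equal to all of A. Then the contraction map ν* : Spec^Δ B → V(ker ν) ⊆ Spec^Δ A is a homeomorphism. -/

import Mathlib

/-- An ideal is a differential ideal w.r.t. a family of derivation maps `d`. -/
def IsDiffIdeal {A : Type*} [CommRing A] {k : ℕ} (d : Fin k → A → A) (I : Ideal A) : Prop :=
  ∀ i : Fin k, ∀ x ∈ I, d i x ∈ I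

/-- The differential spectrum: prime differential ideals, with the Kolchin topology
(the subspace topology induced from the Zariski topology on `PrimeSpectrum`). -/
abbrev DiffSpec {A : Type*} [CommRing A] {k : ℕ} (d : Fin k → A → A) :=
  {p : PrimeSpectrum A // IsDiffIdeal d p.asIdeal}

/-- A Keigher ring: the radical of every differential ideal is differential. -/
def IsKeigher {A : Type*} [CommRing A] {k : ℕ} (d : Fin k → A → A) : Prop :=
  ∀ I : Ideal A, IsDiffIdeal d I → IsDiffIdeal d I.radical

/-- `radDiffGen d E` is the smallest radical differential ideal containing `E`. -/
def radDiffGen {A : Type*} [CommRing A] {k : ℕ} (d : Fin k → A → A) (E : Set A) : Ideal A :=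
  sInf {I : Ideal A | E ⊆ I ∧ I.IsRadical ∧ IsDiffIdeal d I}

section
variable {A B : Type*} [CommRing A] [CommRing B] {k : ℕ}
variable (δA : Fin k → Derivation ℤ A A) (δB : Fin k → Derivation ℤ B B)
variable (ν : A →+* B)

lemma deriv_push (hν : ∀ i a, ν (δA i a) = δB i (ν a)) (c : A) (i : Fin k) (x : B)
    (j : ℕ) (a : A) (h : ν c ^ j * x = ν a) :
    ν c ^ (j + 1) * δB i x = ν (δA i (c * a) - ((j + 1 : ℕ) : A) * (δA i c * a)) := by
  have h1 : ν c ^ (j + 1) * x = ν (c * a) := by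
    rw [map_mul]; linear_combination ν c * h
  have h2 : ν (δA i (c * a)) = δB i (ν c ^ (j + 1) * x) := by
    rw [hν i (c * a), h1]
  simp only [Derivation.leibniz, Derivation.leibniz_pow, Nat.add_sub_cancel, smul_eq_mul,
    nsmul_eq_mul, ← hν, map_add, map_mul] at h2 ⊢
  simp only [map_sub, map_add, map_mul, map_natCast]
  push_cast at h2 ⊢
  linear_combination -h2 - ((j : B) + 1) * ν (δA i c) * h

lemma keyL (hν : ∀ i a, ν (δA i a) = δB i (ν a)) (η : B)
    (hgen : ∀ S : Subring B, (∀ x ∈ S, ∀ i, δB i x ∈ S) → Set.range ν ⊆ (S : Set B) →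
      η ∈ S → S = ⊤)
    {n : ℕ} (b : Fin n → A) (hb : ∀ m : Fin n, ν (b m) * η ∈ Set.range ν)
    (m : Fin n) (x : B) : ∃ (j : ℕ) (a : A), ν (b m) ^ j * x = ν a := by
  let S : Subring B :=
    { carrier := {x | ∃ (j : ℕ) (a : A), ν (b m) ^ j * x = ν a}
      one_mem' := ⟨0, 1, by simp⟩
      zero_mem' := ⟨0, 0, by simp⟩
      mul_mem' := by
        rintro y z ⟨j, a, ha⟩ ⟨l, c, hc⟩
        exact ⟨j + l, a * c, by rw [map_mul, ← ha, ← hc]; ring⟩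
      add_mem' := by
        rintro y z ⟨j, a, ha⟩ ⟨l, c, hc⟩
        refine ⟨j + l, b m ^ l * a + b m ^ j * c, ?_⟩
        rw [map_add, map_mul, map_mul, map_pow, map_pow, ← ha, ← hc]; ring
      neg_mem' := by
        rintro y ⟨j, a, ha⟩
        exact ⟨j, -a, by rw [map_neg, ← ha]; ring⟩ }
  have hS : S = ⊤ := by
    apply hgen
    · rintro y ⟨j, a, ha⟩ i
      exact ⟨j + 1, _, deriv_push δA δB ν hν (b m) i y j a ha⟩
    · rintro _ ⟨a, rfl⟩; exact ⟨0, a, by simp⟩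
    · obtain ⟨c, hc⟩ := hb m
      exact ⟨1, c, by rw [pow_one]; exact hc.symm⟩
  have hx : x ∈ S := hS ▸ Subring.mem_top x
  exact hx

lemma existsNotMem {n : ℕ} (b : Fin n → A)
    (hunit : radDiffGen (fun i => ⇑(δA i)) (Set.range b) = ⊤)
    (p : Ideal A) (hp : p.IsPrime) (hd : IsDiffIdeal (fun i => ⇑(δA i)) p) :
    ∃ m, b m ∉ p := by
  by_contra hcon
  push_neg at hcon
  have hle : radDiffGen (fun i => ⇑(δA i)) (Set.range b) ≤ p :=
    sInf_le ⟨by rintro _ ⟨m, rfl⟩; exact hcon m, hp.isRadical, hd⟩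
  rw [hunit] at hle
  exact hp.ne_top (top_le_iff.mp hle)

lemma prime_over_le {n : ℕ} (b : Fin n → A)
    (hL : ∀ (m : Fin n) (x : B), ∃ (j : ℕ) (a : A), ν (b m) ^ j * x = ν a)
    (q1 q2 : Ideal B) (hq2 : q2.IsPrime) (m : Fin n)
    (hm : b m ∉ Ideal.comap ν q2) (hc : Ideal.comap ν q1 ≤ Ideal.comap ν q2) :
    q1 ≤ q2 := by
  intro x hx
  obtain ⟨j, a, ha⟩ := hL m x
  have h1 : a ∈ Ideal.comap ν q1 := by
    rw [Ideal.mem_comap, ← ha]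
    exact Ideal.mul_mem_left _ _ hx
  have h2 : ν (b m) ^ j * x ∈ q2 := by rw [ha]; exact hc h1
  rcases hq2.mem_or_mem h2 with h | h
  · exact absurd (Ideal.mem_comap.mpr (hq2.mem_of_pow_mem j h)) hm
  · exact h

lemma q_construct (hν : ∀ i a, ν (δA i a) = δB i (ν a)) {n : ℕ} (b : Fin n → A)
    (hL : ∀ (m : Fin n) (x : B), ∃ (j : ℕ) (a : A), ν (b m) ^ j * x = ν a)
    (p : Ideal A) (hp : p.IsPrime) (hdp : IsDiffIdeal (fun i => ⇑(δA i)) p)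
    (hker : RingHom.ker ν ≤ p) (m : Fin n) (hm : b m ∉ p) :
    ∃ q : Ideal B, q.IsPrime ∧ IsDiffIdeal (fun i => ⇑(δB i)) q ∧ Ideal.comap ν q = p := by
  have hkerp : ∀ y z : A, ν y = ν z → y ∈ p → z ∈ p := by
    intro y z hyz hy
    have : z - y ∈ RingHom.ker ν := by
      rw [RingHom.mem_ker, map_sub, hyz, sub_self]
    have := p.add_mem (hker this) hy
    simpa using this
  refine ⟨{ carrier := {x | ∃ (j : ℕ) (a : A), ν (b m) ^ j * x = ν a ∧ a ∈ p}
            zero_mem' := ⟨0, 0, by simp, p.zero_mem⟩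
            add_mem' := by
              rintro y z ⟨j, a, ha, hap⟩ ⟨l, c, hc, hcp⟩
              refine ⟨j + l, b m ^ l * a + b m ^ j * c, ?_, ?_⟩
              · rw [map_add, map_mul, map_mul, map_pow, map_pow, ← ha, ← hc]; ring
              · exact p.add_mem (p.mul_mem_left _ hap) (p.mul_mem_left _ hcp)
            smul_mem' := by
              intro z x hx
              obtain ⟨j, a, ha, hap⟩ := hx
              obtain ⟨l, c, hc⟩ := hL m z
              refine ⟨j + l, c * a, ?_, p.mul_mem_left _ hap⟩
              rw [map_mul, smul_eq_mul]
              linear_combination (ν (b m) ^ j * x) * hc + ν c * ha }, ?_, ?_, ?_⟩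
  · constructor
    · intro htop
      have h1 : (1 : B) ∈ _ := htop ▸ Submodule.mem_top
      obtain ⟨j, a, ha, hap⟩ := h1
      rw [mul_one] at ha
      have : b m ^ j ∈ p := hkerp a (b m ^ j) (by rw [map_pow, ← ha]) hap
      exact hm (hp.mem_of_pow_mem j this)
    · intro x y hxy
      obtain ⟨j, c, hjc, hcp⟩ := hxy
      obtain ⟨jx, ax, hax⟩ := hL m x
      obtain ⟨jy, ay, hay⟩ := hL m y
      have hkey : ν (b m ^ (jx + jy) * c) = ν (b m ^ j * (ax * ay)) := by
        simp only [map_mul, map_pow]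
        linear_combination (-(ν (b m) ^ (jx + jy))) * hjc +
          (ν (b m) ^ (j + jy) * y) * hax + (ν (b m) ^ j * ν ax) * hay
      have h1 : b m ^ j * (ax * ay) ∈ p :=
        hkerp _ _ hkey (p.mul_mem_left _ hcp)
      rcases hp.mem_or_mem h1 with h | h
      · exact absurd (hp.mem_of_pow_mem j h) hm
      · rcases hp.mem_or_mem h with h' | h'
        · exact Or.inl ⟨jx, ax, hax, h'⟩
        · exact Or.inr ⟨jy, ay, hay, h'⟩
  · rintro i x ⟨j, a, ha, hap⟩
    refine ⟨j + 1, δA i (b m * a) - ((j + 1 : ℕ) : A) * (δA i (b m) * a),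
      deriv_push δA δB ν hν (b m) i x j a ha, ?_⟩
    exact sub_mem (hdp i _ (p.mul_mem_left _ hap))
      (p.mul_mem_left _ (p.mul_mem_left _ hap))
  · apply Ideal.ext
    intro a
    rw [Ideal.mem_comap]
    constructor
    · rintro ⟨j, c, h, hcp⟩
      have h' : ν c = ν (b m ^ j * a) := by rw [map_mul, map_pow, ← h]
      have h1 : b m ^ j * a ∈ p := hkerp _ _ h' hcp
      rcases hp.mem_or_mem h1 with hh | hh
      · exact absurd (hp.mem_of_pow_mem j hh) hm
      · exact hh
    · intro ha
      exact ⟨0, a, by simp, ha⟩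

end

/-- If `B` is differentially generated over `ν(A)` by a single element `η` with
`ν(b k) * η ∈ ν(A)` for elements `b k` whose smallest radical differential ideal is all
of `A`, then contraction `ν* : Spec^Δ B → V(ker ν)` is a homeomorphism. -/
theorem stmt6 {A B : Type*} [CommRing A] [CommRing B] {k : ℕ}
    (δA : Fin k → Derivation ℤ A A) (δB : Fin k → Derivation ℤ B B)
    (hcommA : ∀ i j a, δA i (δA j a) = δA j (δA i a))
    (hcommB : ∀ i j b, δB i (δB j b) = δB j (δB i b))
    (ν : A →+* B) (hν : ∀ i a, ν (δA i a) = δB i (ν a))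
    (η : B)
    (hgen : ∀ S : Subring B, (∀ x ∈ S, ∀ i, δB i x ∈ S) → Set.range ν ⊆ (S : Set B) →
      η ∈ S → S = ⊤)
    (n : ℕ) (b : Fin n → A)
    (hb : ∀ m : Fin n, ν (b m) * η ∈ Set.range ν)
    (hunit : radDiffGen (fun i => ⇑(δA i)) (Set.range b) = ⊤) :
    ∃ h : DiffSpec (fun i => ⇑(δB i)) ≃ₜ
        {p : DiffSpec (fun i => ⇑(δA i)) // RingHom.ker ν ≤ p.1.asIdeal},
      ∀ q, (h q).1.1.asIdeal = Ideal.comap ν q.1.asIdeal := by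
  classical
  have hL : ∀ (m : Fin n) (x : B), ∃ (j : ℕ) (a : A), ν (b m) ^ j * x = ν a :=
    fun m x => keyL δA δB ν hν η hgen b hb m x
  have hdiffc : ∀ q : DiffSpec (fun i => ⇑(δB i)),
      IsDiffIdeal (fun i => ⇑(δA i)) (Ideal.comap ν q.1.asIdeal) := by
    intro q i x hx
    rw [Ideal.mem_comap] at hx ⊢
    rw [hν]
    exact q.2 i _ hx
  have hkerc : ∀ q : DiffSpec (fun i => ⇑(δB i)),
      RingHom.ker ν ≤ Ideal.comap ν q.1.asIdeal := by
    intro q x hx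
    rw [Ideal.mem_comap, RingHom.mem_ker.mp hx]
    exact (q.1.asIdeal).zero_mem
  let F : DiffSpec (fun i => ⇑(δB i)) →
      {p : DiffSpec (fun i => ⇑(δA i)) // RingHom.ker ν ≤ p.1.asIdeal} :=
    fun q => ⟨⟨(PrimeSpectrum.comap ν) q.1, hdiffc q⟩, hkerc q⟩
  have hinj : Function.Injective F := by
    intro q1 q2 hq
    have hc : Ideal.comap ν q1.1.asIdeal = Ideal.comap ν q2.1.asIdeal :=
      congrArg (fun r => r.1.1.asIdeal) hq
    haveI := q1.1.2
    haveI := q2.1.2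
    haveI : (Ideal.comap ν q1.1.asIdeal).IsPrime := Ideal.IsPrime.comap ν
    obtain ⟨m, hm⟩ := existsNotMem δA b hunit (Ideal.comap ν q1.1.asIdeal)
      inferInstance (hdiffc q1)
    have hm2 : b m ∉ Ideal.comap ν q2.1.asIdeal := hc ▸ hm
    have h12 : q1.1.asIdeal = q2.1.asIdeal :=
      le_antisymm
        (prime_over_le ν b hL _ _ q2.1.2 m hm2 (le_of_eq hc))
        (prime_over_le ν b hL _ _ q1.1.2 m hm (le_of_eq hc.symm))
    exact Subtype.ext (PrimeSpectrum.ext h12)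
  have hsurj : Function.Surjective F := by
    rintro ⟨⟨p, hdp⟩, hker⟩
    obtain ⟨m, hm⟩ := existsNotMem δA b hunit p.asIdeal p.2 hdp
    obtain ⟨q, hq1, hq2, hq3⟩ := q_construct δA δB ν hν b hL p.asIdeal p.2 hdp hker m hm
    exact ⟨⟨⟨q, hq1⟩, hq2⟩, Subtype.ext (Subtype.ext (PrimeSpectrum.ext hq3))⟩
  have hcont : Continuous F := by
    apply Continuous.subtype_mk
    apply Continuous.subtype_mk
    exact (PrimeSpectrum.continuous_comap ν).comp continuous_subtype_val
  have hopen : IsOpenMap F := by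
    intro U hU
    obtain ⟨V, hVo, rfl⟩ := isOpen_induced_iff.mp hU
    obtain ⟨E, hE⟩ := (PrimeSpectrum.isOpen_iff V).mp hVo
    have hVE : V = (PrimeSpectrum.zeroLocus E)ᶜ := by rw [← hE, compl_compl]
    choose jw aw haw using hL
    let W : Set (PrimeSpectrum A) :=
      ⋃ (x : B) (_ : x ∈ E) (m : Fin n), ↑(PrimeSpectrum.basicOpen (aw m x))
    have hWo : IsOpen W :=
      isOpen_iUnion fun x => isOpen_iUnion fun _ => isOpen_iUnion fun m =>
        (PrimeSpectrum.basicOpen _).2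
    have key : F '' (Subtype.val ⁻¹' V) = (fun r => r.1.1) ⁻¹' W := by
      ext r
      constructor
      · rintro ⟨q, hqU, rfl⟩
        rw [Set.mem_preimage, hVE, Set.mem_compl_iff, PrimeSpectrum.mem_zeroLocus] at hqU
        obtain ⟨x, hxE, hxq⟩ := Set.not_subset.mp hqU
        haveI := q.1.2
        haveI : (Ideal.comap ν q.1.asIdeal).IsPrime := Ideal.IsPrime.comap ν
        obtain ⟨m, hm⟩ := existsNotMem δA b hunit (Ideal.comap ν q.1.asIdeal)
          inferInstance (hdiffc q)
        refine Set.mem_iUnion.mpr ⟨x, Set.mem_iUnion.mpr ⟨hxE, Set.mem_iUnion.mpr ⟨m, ?_⟩⟩⟩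
        rw [SetLike.mem_coe, PrimeSpectrum.mem_basicOpen]
        intro hcontra
        have h1 : ν (aw m x) ∈ q.1.asIdeal := hcontra
        rw [← haw m x] at h1
        rcases q.1.2.mem_or_mem h1 with h | h
        · exact hm (Ideal.mem_comap.mpr (q.1.2.mem_of_pow_mem _ h))
        · exact hxq h
      · intro hr
        obtain ⟨x, hx⟩ := Set.mem_iUnion.mp (Set.mem_preimage.mp hr)
        obtain ⟨hxE, hx2⟩ := Set.mem_iUnion.mp hx
        obtain ⟨m, hm⟩ := Set.mem_iUnion.mp hx2
        rw [SetLike.mem_coe, PrimeSpectrum.mem_basicOpen] at hm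
        obtain ⟨q, hq⟩ := hsurj r
        refine ⟨q, ?_, hq⟩
        rw [Set.mem_preimage, hVE, Set.mem_compl_iff, PrimeSpectrum.mem_zeroLocus]
        intro hsub
        have hxq : x ∈ q.1.asIdeal := hsub hxE
        have h1 : ν (aw m x) ∈ q.1.asIdeal := by
          rw [← haw m x]
          exact Ideal.mul_mem_left _ _ hxq
        have h2 : aw m x ∈ Ideal.comap ν q.1.asIdeal := h1
        have h3 : Ideal.comap ν q.1.asIdeal = r.1.1.asIdeal :=
          congrArg (fun s => s.1.1.asIdeal) hq
        exact hm (h3 ▸ h2)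
    rw [key]
    exact hWo.preimage (continuous_subtype_val.comp continuous_subtype_val)
  exact ⟨Equiv.toHomeomorphOfContinuousOpen (Equiv.ofBijective F ⟨hinj, hsurj⟩)
    hcont hopen, fun q => rfl⟩
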